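/- For every integer N ≥ 3, every eigenvalue λ ∈ ℂ of the matrix P_sk (viewed as a complex matrix by mapping its real entries into ℂ) satisfies Re(λ) ≥ h^β·c_0^{(α,σ)} > 0. -/

import Mathlib

open scoped Matrix

/-- The coefficients `g_k^{(β)}`. -/
noncomputable def gcoef (β : ℝ) : ℕ → ℝ
  | 0 => 1
  | k + 1 => (1 - (β + 1) / ((k : ℝ) + 1)) * gcoef β k

/-- The WSGD coefficients `ω_k^{(β)}`. -/
noncomputable def w (β : ℝ) : ℕ → ℝ
  | 0 => β / 2 * gcoef β 0
  | k + 1 => β / 2 * gcoef β (k + 1) + (2 - β) / 2 * gcoef β k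
/-- The `(N−1) × (N−1)` lower Hessenberg Toeplitz matrix `G_β`
(1-based entry `(i,j)` equals `ω_{i−j+1}` when `i − j + 1 ≥ 0`, else `0`). -/
noncomputable def Gmat (β : ℝ) (N : ℕ) : Matrix (Fin (N - 1)) (Fin (N - 1)) ℝ :=
  Matrix.of fun i j => if (j : ℕ) ≤ (i : ℕ) + 1 then w β ((i : ℕ) + 1 - (j : ℕ)) else 0

/-- `K_N = e₁·G_β + e₂·G_βᵀ`. -/
noncomputable def Kmat (β e1 e2 : ℝ) (N : ℕ) : Matrix (Fin (N - 1)) (Fin (N - 1)) ℝ :=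
  e1 • Gmat β N + e2 • (Gmat β N)ᵀ
/-- `c_0^{(α,σ)} = τ^{−α}·σ^{1−α}/Γ(2−α)` with `σ = 1 − α/2`. -/
noncomputable def c0 (α τ : ℝ) : ℝ :=
  τ ^ (-α) * (1 - α / 2) ^ (1 - α) / Real.Gamma (2 - α)

/-- `A_0 = h^β·c_0^{(α,σ)}·I − σ·K_N` with `σ = 1 − α/2`. -/
noncomputable def A0mat (β α h τ e1 e2 : ℝ) (N : ℕ) :
    Matrix (Fin (N - 1)) (Fin (N - 1)) ℝ :=
  (h ^ β * c0 α τ) • (1 : Matrix (Fin (N - 1)) (Fin (N - 1)) ℝ) -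
    (1 - α / 2) • Kmat β e1 e2 N
/-- The skew-circulant matrix `sk(G_β)` with first column
`(ω_1, ω_2, …, ω_{N−2}, −ω_0)ᵀ`. -/
noncomputable def skG (β : ℝ) (N : ℕ) : Matrix (Fin (N - 1)) (Fin (N - 1)) ℝ :=
  Matrix.of fun i j =>
    if (j : ℕ) ≤ (i : ℕ) then
      (if (i : ℕ) - (j : ℕ) = N - 2 then -(w β 0) else w β ((i : ℕ) - (j : ℕ) + 1))
    else
      -(if N - 1 - ((j : ℕ) - (i : ℕ)) = N - 2 then -(w β 0)
        else w β (N - 1 - ((j : ℕ) - (i : ℕ)) + 1))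

/-- `sk(K_N) = e₁·sk(G_β) + e₂·sk(G_β)ᵀ`. -/
noncomputable def skK (β e1 e2 : ℝ) (N : ℕ) : Matrix (Fin (N - 1)) (Fin (N - 1)) ℝ :=
  e1 • skG β N + e2 • (skG β N)ᵀ

/-- The skew-circulant preconditioner `P_sk = h^β·c_0^{(α,σ)}·I − σ·sk(K_N)`. -/
noncomputable def Psk (β α h τ e1 e2 : ℝ) (N : ℕ) :
    Matrix (Fin (N - 1)) (Fin (N - 1)) ℝ :=
  (h ^ β * c0 α τ) • (1 : Matrix (Fin (N - 1)) (Fin (N - 1)) ℝ) -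
    (1 - α / 2) • skK β e1 e2 N

lemma gcoef_zero (β : ℝ) : gcoef β 0 = 1 := rfl
lemma gcoef_succ (β : ℝ) (k : ℕ) :
    gcoef β (k+1) = (1 - (β + 1) / ((k : ℝ) + 1)) * gcoef β k := rfl

lemma gcoef_nonneg {β : ℝ} (hβ1 : 1 < β) (hβ2 : β < 2) :
    ∀ k, 2 ≤ k → 0 ≤ gcoef β k := by
  intro k hk
  induction k, hk using Nat.le_induction with
  | base =>
      have h2 : gcoef β 2 = (1 - (β+1)/((1:ℝ)+1)) * ((1 - (β+1)/((0:ℝ)+1)) * 1) := by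
        rw [gcoef_succ, gcoef_succ, gcoef_zero]; norm_num
      rw [h2]; nlinarith
  | succ k hk ih =>
      have : gcoef β (k+1) = (1 - (β + 1) / ((k : ℝ) + 1)) * gcoef β k := rfl
      rw [this]
      have hk3 : (3:ℝ) ≤ (k:ℝ) + 1 := by
        have h2 : (2:ℝ) ≤ (k:ℝ) := by exact_mod_cast hk
        linarith
      have hfac : 0 ≤ 1 - (β + 1) / ((k : ℝ) + 1) := by
        rw [sub_nonneg, div_le_one (by linarith)]
        linarith
      exact mul_nonneg hfac ih

lemma sum_gcoef {β : ℝ} (m : ℕ) :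
    β * ∑ k ∈ Finset.range (m+1), gcoef β k = -((m:ℝ)+1) * gcoef β (m+1) := by
  induction m with
  | zero =>
      rw [Finset.sum_range_one, gcoef_succ, gcoef_zero]; push_cast; ring
  | succ m ih =>
      rw [Finset.sum_range_succ, mul_add, ih, gcoef_succ β (m+1)]
      have h1 : ((m:ℝ)+1) + 1 ≠ 0 := by positivity
      push_cast
      field_simp
      ring
lemma sum_gcoef_nonpos {β : ℝ} (hβ1 : 1 < β) (hβ2 : β < 2) (m : ℕ) (hm : 1 ≤ m) :
    ∑ k ∈ Finset.range (m+1), gcoef β k ≤ 0 := by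
  have h := sum_gcoef (β := β) m
  have hg : 0 ≤ gcoef β (m+1) := gcoef_nonneg hβ1 hβ2 (m+1) (by omega)
  have hβ0 : 0 < β := by linarith
  nlinarith [mul_nonneg (by positivity : (0:ℝ) ≤ (m:ℝ)+1) hg]

lemma w_zero (β : ℝ) : w β 0 = β / 2 := by
  show β / 2 * gcoef β 0 = β / 2; rw [gcoef_zero]; ring

lemma w_succ (β : ℝ) (k : ℕ) :
    w β (k+1) = β / 2 * gcoef β (k + 1) + (2 - β) / 2 * gcoef β k := rfl

lemma w_one_nonpos {β : ℝ} (hβ1 : 1 < β) : w β 1 ≤ 0 := by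
  rw [w_succ, gcoef_succ, gcoef_zero]
  norm_num
  nlinarith

lemma w_nonneg {β : ℝ} (hβ1 : 1 < β) (hβ2 : β < 2) (k : ℕ) (hk : 3 ≤ k) :
    0 ≤ w β k := by
  obtain ⟨j, rfl⟩ : ∃ j, k = j + 1 := ⟨k - 1, by omega⟩
  rw [w_succ]
  have h1 : 0 ≤ gcoef β (j+1) := gcoef_nonneg hβ1 hβ2 _ (by omega)
  have h2 : 0 ≤ gcoef β j := gcoef_nonneg hβ1 hβ2 _ (by omega)
  have : 0 < β := by linarith
  nlinarith

lemma w0_add_w2_nonneg {β : ℝ} (hβ1 : 1 < β) (hβ2 : β < 2) :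
    0 ≤ w β 0 + w β 2 := by
  rw [w_zero, w_succ, gcoef_succ, gcoef_succ, gcoef_zero]
  norm_num
  nlinarith [mul_nonneg (mul_nonneg (by linarith : (0:ℝ) ≤ β) (by linarith : (0:ℝ) ≤ β - 1)) (by linarith : (0:ℝ) ≤ β + 2)]

lemma sum_w {β : ℝ} (m : ℕ) :
    ∑ k ∈ Finset.range (m+2), w β k
      = β / 2 * ∑ k ∈ Finset.range (m+2), gcoef β k
        + (2-β)/2 * ∑ k ∈ Finset.range (m+1), gcoef β k := by
  induction m with
  | zero =>
      norm_num [Finset.sum_range_succ, w_succ, w_zero, gcoef_zero]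
      ring
  | succ m ih =>
      rw [show m + 1 + 2 = (m + 2) + 1 by ring, Finset.sum_range_succ,
        Finset.sum_range_succ (f := gcoef β) (n := m+2), ih,
        show m + 1 + 1 = (m + 1) + 1 by ring,
        Finset.sum_range_succ (f := gcoef β) (n := m+1), w_succ]
      ring

lemma sum_w_nonpos {β : ℝ} (hβ1 : 1 < β) (hβ2 : β < 2) (m : ℕ) :
    ∑ k ∈ Finset.range (m+3), w β k ≤ 0 := by
  have h := sum_w (β := β) (m+1)
  rw [show m + 1 + 2 = m + 3 by ring] at h
  rw [h]
  have h1 : ∑ k ∈ Finset.range (m+3), gcoef β k ≤ 0 := by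
    have := sum_gcoef_nonpos hβ1 hβ2 (m+2) (by omega)
    rwa [show m + 2 + 1 = m + 3 by ring] at this
  have h2 : ∑ k ∈ Finset.range (m+2), gcoef β k ≤ 0 := by
    have := sum_gcoef_nonpos hβ1 hβ2 (m+1) (by omega)
    rwa [show m + 1 + 1 = m + 2 by ring] at this
  have hb : 0 < β := by linarith
  nlinarith
noncomputable def ccoef (β : ℝ) (n m : ℕ) : ℝ :=
  if m = n - 1 then -(w β 0) else w β (m+1)

lemma Lbound {β : ℝ} (hβ1 : 1 < β) (hβ2 : β < 2) (n : ℕ) (hn : 2 ≤ n)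
    (r : ℕ → ℝ) (hr1 : ∀ m, r m ≤ 1) (hr0 : r 0 = 1) (hlast : r (n-1) = - r 1) :
    ∑ m ∈ Finset.range n, ccoef β n m * r m ≤ 0 := by
  obtain ⟨p, rfl⟩ : ∃ p, n = p + 1 := ⟨n - 1, by omega⟩
  rw [Finset.sum_range_succ]
  have hlastterm : ccoef β (p+1) p * r p = w β 0 * r 1 := by
    have : ccoef β (p+1) p = -(w β 0) := by simp [ccoef]
    rw [this]
    have hp : r ((p+1)-1) = - r 1 := hlast
    simp only [show p + 1 - 1 = p from rfl] at hp
    rw [hp]; ring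
  rw [hlastterm]
  have hcc : ∀ m ∈ Finset.range p, ccoef β (p+1) m * r m = w β (m+1) * r m := by
    intro m hm
    simp only [Finset.mem_range] at hm
    simp only [ccoef]
    rw [if_neg (by omega : ¬ m = (p+1) - 1)]
  rw [Finset.sum_congr rfl hcc]
  rcases Nat.lt_or_ge p 2 with hp2 | hp2
  · -- n = 2, p = 1
    interval_cases p
    · omega
    · have hr1z : r 1 = 0 := by
        have : r 1 = - r 1 := hlast
        linarith
      simp [hr1z, Finset.sum_range_one, hr0]
      exact w_one_nonpos hβ1
  · -- p ≥ 2, so n ≥ 3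
    have key : ∑ m ∈ Finset.range p, w β (m+1) * r m + w β 0 * r 1
        ≤ ∑ k ∈ Finset.range (p+1), w β k := by
      have split : ∑ m ∈ Finset.range p, w β (m+1) * r m
          = w β 1 * r 0 + w β 2 * r 1 + ∑ m ∈ Finset.Ico 2 p, w β (m+1) * r m := by
        rw [Finset.range_eq_Ico, ← Finset.sum_Ico_consecutive _ (by omega : 0 ≤ 2) (by omega : 2 ≤ p)]
        congr 1
        rw [show (2:ℕ) = 1 + 1 from rfl, Finset.sum_Ico_succ_top (by omega),
          Finset.sum_Ico_succ_top (by omega)]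
        simp
      have splitw : ∑ k ∈ Finset.range (p+1), w β k
          = w β 0 + w β 1 + w β 2 + ∑ m ∈ Finset.Ico 2 p, w β (m+1) := by
        rw [Finset.sum_range_succ']
        rw [Finset.range_eq_Ico, ← Finset.sum_Ico_consecutive _ (by omega : 0 ≤ 2) (by omega : 2 ≤ p)]
        rw [show (2:ℕ) = 1 + 1 from rfl, Finset.sum_Ico_succ_top (by omega),
          Finset.sum_Ico_succ_top (by omega)]
        simp
        ring
      rw [split, splitw, hr0]
      have h02 : (w β 0 + w β 2) * r 1 ≤ w β 0 + w β 2 := by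
        have := w0_add_w2_nonneg hβ1 hβ2
        nlinarith [hr1 1]
      have hterm : ∑ m ∈ Finset.Ico 2 p, w β (m+1) * r m ≤ ∑ m ∈ Finset.Ico 2 p, w β (m+1) := by
        apply Finset.sum_le_sum
        intro m hm
        simp only [Finset.mem_Ico] at hm
        have hw := w_nonneg hβ1 hβ2 (m+1) (by omega)
        nlinarith [hr1 m]
      nlinarith
    have hfin : ∑ k ∈ Finset.range (p+1), w β k ≤ 0 := by
      obtain ⟨q, rfl⟩ : ∃ q, p = q + 2 := ⟨p - 2, by omega⟩
      exact sum_w_nonpos hβ1 hβ2 q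
    linarith
lemma two_pi_I_ne_zero : (2 * (Real.pi : ℂ) * Complex.I) ≠ 0 :=
  mul_ne_zero (mul_ne_zero two_ne_zero (by exact_mod_cast Real.pi_ne_zero)) Complex.I_ne_zero

lemma KSsum (n : ℕ) (hn : 0 < n) (t : ℤ) (ht : ¬ ((n:ℤ) ∣ t)) :
    ∑ j ∈ Finset.range n,
      Complex.exp ((t:ℂ) * ((2*(j:ℂ)+1) * (Real.pi:ℂ) / (n:ℂ)) * Complex.I) = 0 := by
  have hn0 : (n:ℂ) ≠ 0 := Nat.cast_ne_zero.mpr (by omega)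
  set π : ℂ := (Real.pi : ℂ) with hπdef
  set r : ℂ := Complex.exp ((t:ℂ) * (2 * π / n) * Complex.I) with hr
  have hterm : ∀ j ∈ Finset.range n,
      Complex.exp ((t:ℂ) * ((2*(j:ℂ)+1) * π / n) * Complex.I)
        = Complex.exp ((t:ℂ) * (π / n) * Complex.I) * r ^ j := by
    intro j _
    rw [hr, ← Complex.exp_nat_mul, ← Complex.exp_add]
    congr 1
    field_simp
    ring
  rw [Finset.sum_congr rfl hterm, ← Finset.mul_sum]
  have hr1 : r ≠ 1 := by
    rw [hr]
    intro hcon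
    rw [Complex.exp_eq_one_iff] at hcon
    obtain ⟨k, hk⟩ := hcon
    apply ht
    refine ⟨k, ?_⟩
    have h2 : (t:ℂ) * (2*π*Complex.I) / n = k * (2*π*Complex.I) := by
      rw [← hk]; ring
    have ha : (t:ℂ) * (2*π*Complex.I) = ((k:ℂ) * n) * (2*π*Complex.I) := by
      rw [div_eq_iff hn0] at h2
      rw [h2]; ring
    have h4 := mul_right_cancel₀ two_pi_I_ne_zero ha
    have h5 : (t:ℂ) = ((n:ℤ) * k : ℤ) := by push_cast; rw [h4]; ring
    exact_mod_cast h5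
  have hrn : r ^ n = 1 := by
    rw [hr, ← Complex.exp_nat_mul]
    have heq : (n:ℂ) * ((t:ℂ) * (2 * π / n) * Complex.I) = (t:ℂ) * (2 * π * Complex.I) := by
      field_simp
    rw [heq, Complex.exp_eq_one_iff]
    exact ⟨t, by ring⟩
  rw [geom_sum_eq hr1 n, hrn]
  simp

lemma rowSum (n : ℕ) (c : ℕ → ℂ) (ζ : ℂ) (hζ : ζ ^ n = -1) (a : ℕ) (ha : a < n) :
    ∑ b ∈ Finset.range n, (if b ≤ a then c (a - b) else -(c (n - (b - a)))) * ζ ^ b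
      = (∑ m ∈ Finset.range n, c m * (ζ⁻¹) ^ m) * ζ ^ a := by
  have hζ0 : ζ ≠ 0 := by
    intro h
    rw [h, zero_pow (by omega)] at hζ
    exact absurd hζ.symm (by norm_num)
  rw [Finset.sum_mul]
  refine (Finset.sum_nbij' (i := fun m => if m ≤ a then a - m else n + a - m)
    (j := fun b => if b ≤ a then a - b else n + a - b) ?_ ?_ ?_ ?_ ?_).symm
  · intro m hm; simp only [Finset.mem_range] at *; split_ifs <;> omega
  · intro b hb; simp only [Finset.mem_range] at *; split_ifs <;> omega
  · intro m hm; simp only [Finset.mem_range] at hm; beta_reduce; split_ifs <;> omega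
  · intro b hb; simp only [Finset.mem_range] at hb; beta_reduce; split_ifs <;> omega
  · intro m hm
    simp only [Finset.mem_range] at hm
    beta_reduce
    by_cases hma : m ≤ a
    · rw [if_pos hma, if_pos (by omega : a - m ≤ a),
        show a - (a - m) = m by omega, pow_sub₀ ζ hζ0 (by omega : m ≤ a), inv_pow]
      ring
    · rw [if_neg hma, if_neg (by omega : ¬ n + a - m ≤ a),
        show n - (n + a - m - a) = m by omega,
        show n + a - m = n + a - m by rfl]
      have hp : ζ ^ (n + a - m) = -(ζ ^ a * (ζ⁻¹) ^ m) := by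
        have h1 : ζ ^ (n + a - m) = ζ ^ (n + a) * (ζ ^ m)⁻¹ :=
          pow_sub₀ ζ hζ0 (by omega)
        rw [h1, pow_add, hζ, inv_pow]; ring
      rw [hp]
      ring

lemma colSum (n : ℕ) (c : ℕ → ℂ) (ζ : ℂ) (hζ : ζ ^ n = -1) (b : ℕ) (hb : b < n) :
    ∑ a ∈ Finset.range n, (if b ≤ a then c (a - b) else -(c (n - (b - a)))) * ζ ^ a
      = (∑ m ∈ Finset.range n, c m * ζ ^ m) * ζ ^ b := by
  have hζ0 : ζ ≠ 0 := by
    intro h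
    rw [h, zero_pow (by omega)] at hζ
    exact absurd hζ.symm (by norm_num)
  rw [Finset.sum_mul]
  refine (Finset.sum_nbij' (i := fun m => if m + b < n then m + b else m + b - n)
    (j := fun a => if b ≤ a then a - b else n + a - b) ?_ ?_ ?_ ?_ ?_).symm
  · intro m hm; simp only [Finset.mem_range] at *; split_ifs <;> omega
  · intro a ha; simp only [Finset.mem_range] at *; split_ifs <;> omega
  · intro m hm; simp only [Finset.mem_range] at hm; beta_reduce; split_ifs <;> omega
  · intro a ha; simp only [Finset.mem_range] at ha; beta_reduce; split_ifs <;> omega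
  · intro m hm
    simp only [Finset.mem_range] at hm
    beta_reduce
    by_cases hmb : m + b < n
    · rw [if_pos hmb, if_pos (by omega : b ≤ m + b), show m + b - b = m by omega, pow_add]
      ring
    · rw [if_neg hmb, if_neg (by omega : ¬ b ≤ m + b - n),
        show n - (b - (m + b - n)) = m by omega]
      have hp : ζ ^ (m + b - n) = -(ζ ^ m * ζ ^ b) := by
        have h1 : ζ ^ (m + b - n) * ζ ^ n = ζ ^ (m + b) := by
          rw [← pow_add]; congr 1; omega
        rw [hζ, pow_add] at h1
        linear_combination -h1
      rw [hp]
      ring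
noncomputable def eta (n : ℕ) (j : Fin n) : ℂ :=
  Complex.exp ((((2*(j:ℕ)+1) * Real.pi / n : ℝ)) * Complex.I)

lemma eta_pow (n : ℕ) (hn : 0 < n) (j : Fin n) : (eta n j) ^ n = -1 := by
  unfold eta
  rw [← Complex.exp_nat_mul]
  have hn0 : (n:ℂ) ≠ 0 := Nat.cast_ne_zero.mpr (by omega)
  have heq : (n:ℂ) * ((((2*(j:ℕ)+1) * Real.pi / n : ℝ)) * Complex.I)
      = ((2*(j:ℕ)+1) : ℕ) * ((Real.pi:ℂ) * Complex.I) := by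
    push_cast
    field_simp
  rw [heq, Complex.exp_nat_mul, Complex.exp_mul_I]
  simp [Complex.cos_pi, Complex.sin_pi]
  exact Odd.neg_one_pow ⟨(j:ℕ), by ring⟩

lemma eta_abs (n : ℕ) (j : Fin n) : ‖eta n j‖ = 1 :=
  Complex.norm_exp_ofReal_mul_I _

lemma eta_conj_mul_pow (n : ℕ) (j : Fin n) (a b : ℕ) :
    (eta n j)^a * ((starRingEnd ℂ) (eta n j))^b
      = Complex.exp ((((a:ℤ) - (b:ℤ) : ℤ):ℂ) * ((2*(j:ℕ)+1) * (Real.pi:ℂ) / (n:ℂ)) * Complex.I) := by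
  unfold eta
  rw [← Complex.exp_conj, ← Complex.exp_nat_mul, ← Complex.exp_nat_mul, ← Complex.exp_add]
  congr 1
  rw [map_mul, Complex.conj_I, Complex.conj_ofReal]
  push_cast
  ring

lemma eta_orth (n : ℕ) (hn : 0 < n) (a b : Fin n) :
    ∑ j : Fin n, (eta n j)^(a:ℕ) * ((starRingEnd ℂ) (eta n j))^(b:ℕ)
      = if a = b then (n:ℂ) else 0 := by
  by_cases hab : a = b
  · subst hab
    rw [if_pos rfl]
    have : ∀ j : Fin n, (eta n j)^(a:ℕ) * ((starRingEnd ℂ) (eta n j))^(a:ℕ) = 1 := by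
      intro j
      rw [eta_conj_mul_pow]
      simp
    rw [Finset.sum_congr rfl (fun j _ => this j)]
    simp
  · rw [if_neg hab]
    have hterm : ∀ j : Fin n, (eta n j)^(a:ℕ) * ((starRingEnd ℂ) (eta n j))^(b:ℕ)
        = Complex.exp ((((a:ℤ) - (b:ℤ) : ℤ):ℂ) * ((2*(j:ℕ)+1) * (Real.pi:ℂ) / (n:ℂ)) * Complex.I) :=
      fun j => eta_conj_mul_pow n j _ _
    rw [Finset.sum_congr rfl (fun j _ => hterm j)]
    rw [Fin.sum_univ_eq_sum_range
      (fun x => Complex.exp ((((a:ℤ) - (b:ℤ) : ℤ):ℂ) * ((2*(x:ℂ)+1) * (Real.pi:ℂ) / (n:ℂ)) * Complex.I)) n]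
    apply KSsum n hn
    intro hdvd
    obtain ⟨k, hk⟩ := hdvd
    set t : ℤ := (a:ℤ) - (b:ℤ) with htdef
    have h1 : (0:ℤ) < n := by exact_mod_cast hn
    have ht0 : t ≠ 0 := by
      simp only [htdef, sub_ne_zero]
      intro hcon
      exact hab (Fin.ext (by exact_mod_cast hcon))
    have htlt : t < n := by
      have h2 := a.isLt
      have h3 : (a:ℤ) < n := by exact_mod_cast h2
      have h4 : (0:ℤ) ≤ (b:ℤ) := Int.ofNat_nonneg _
      omega
    have htgt : -(n:ℤ) < t := by
      have h2 := b.isLt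
      have h3 : (b:ℤ) < n := by exact_mod_cast h2
      have h4 : (0:ℤ) ≤ (a:ℤ) := Int.ofNat_nonneg _
      omega
    rcases lt_trichotomy k 0 with hc|hc|hc
    · have : t ≤ -n := by rw [hk]; nlinarith
      linarith
    · rw [hc, mul_zero] at hk; exact ht0 hk
    · have : (n:ℤ) ≤ t := by rw [hk]; nlinarith
      linarith

lemma exists_dk (n : ℕ) (hn : 0 < n) (v : Fin n → ℂ) (hv : v ≠ 0) :
    ∃ k : Fin n, ∑ b : Fin n, ((starRingEnd ℂ) (eta n k))^(b:ℕ) * v b ≠ 0 := by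
  by_contra hall
  push_neg at hall
  apply hv
  funext a
  have key : (n:ℂ) * v a
      = ∑ j : Fin n, (eta n j)^(a:ℕ)
          * (∑ b : Fin n, ((starRingEnd ℂ) (eta n j))^(b:ℕ) * v b) := by
    have step1 : ∀ j : Fin n, (eta n j)^(a:ℕ)
        * (∑ b : Fin n, ((starRingEnd ℂ) (eta n j))^(b:ℕ) * v b)
        = ∑ b : Fin n, ((eta n j)^(a:ℕ) * ((starRingEnd ℂ) (eta n j))^(b:ℕ)) * v b := by
      intro j
      rw [Finset.mul_sum]
      exact Finset.sum_congr rfl (fun b _ => by ring)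
    rw [Finset.sum_congr rfl (fun j _ => step1 j), Finset.sum_comm]
    have step2 : ∀ b : Fin n,
        ∑ j : Fin n, ((eta n j)^(a:ℕ) * ((starRingEnd ℂ) (eta n j))^(b:ℕ)) * v b
        = (if a = b then (n:ℂ) else 0) * v b := by
      intro b
      rw [← Finset.sum_mul, eta_orth n hn a b]
    rw [Finset.sum_congr rfl (fun b _ => step2 b)]
    simp [Finset.sum_ite_eq]
  rw [Finset.sum_congr rfl (fun j _ => by rw [hall j, mul_zero])] at key
  simp only [Finset.sum_const_zero] at key
  have hn0 : (n:ℂ) ≠ 0 := Nat.cast_ne_zero.mpr (by omega)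
  simpa [hn0] using key
lemma skG_entry (β : ℝ) (N : ℕ) (hN : 3 ≤ N) (i j : Fin (N-1)) :
    skG β N i j = (if (j:ℕ) ≤ (i:ℕ) then ccoef β (N-1) ((i:ℕ)-(j:ℕ))
      else -(ccoef β (N-1) ((N-1) - ((j:ℕ)-(i:ℕ))))) := by
  have hnn : N - 1 - 1 = N - 2 := by omega
  simp only [skG, ccoef, Matrix.of_apply, hnn]

lemma skG_colSum (β : ℝ) (N : ℕ) (hN : 3 ≤ N) (ζ : ℂ) (hζ : ζ^(N-1) = -1) (b : Fin (N-1)) :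
    ∑ a : Fin (N-1), ((skG β N a b : ℝ) : ℂ) * ζ^(a:ℕ)
      = (∑ m ∈ Finset.range (N-1), ((ccoef β (N-1) m : ℝ):ℂ) * ζ^m) * ζ^(b:ℕ) := by
  have hentry : ∀ a : Fin (N-1), ((skG β N a b : ℝ):ℂ) * ζ^(a:ℕ)
      = (if (b:ℕ) ≤ (a:ℕ) then ((ccoef β (N-1) ((a:ℕ)-(b:ℕ)) : ℝ):ℂ)
          else -(((ccoef β (N-1) ((N-1)-((b:ℕ)-(a:ℕ))) : ℝ):ℂ))) * ζ^(a:ℕ) := by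
    intro a
    rw [skG_entry β N hN a b]
    congr 1
    split_ifs <;> simp
  rw [Finset.sum_congr rfl (fun a _ => hentry a)]
  rw [Fin.sum_univ_eq_sum_range
    (fun x => (if (b:ℕ) ≤ x then ((ccoef β (N-1) (x-(b:ℕ)) : ℝ):ℂ)
      else -(((ccoef β (N-1) ((N-1)-((b:ℕ)-x)) : ℝ):ℂ))) * ζ^x) (N-1)]
  exact colSum (N-1) (fun m => ((ccoef β (N-1) m : ℝ):ℂ)) ζ hζ (b:ℕ) b.isLt

lemma skG_rowSum (β : ℝ) (N : ℕ) (hN : 3 ≤ N) (ζ : ℂ) (hζ : ζ^(N-1) = -1) (b : Fin (N-1)) :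
    ∑ a : Fin (N-1), ((skG β N b a : ℝ) : ℂ) * ζ^(a:ℕ)
      = (∑ m ∈ Finset.range (N-1), ((ccoef β (N-1) m : ℝ):ℂ) * (ζ⁻¹)^m) * ζ^(b:ℕ) := by
  have hentry : ∀ a : Fin (N-1), ((skG β N b a : ℝ):ℂ) * ζ^(a:ℕ)
      = (if (a:ℕ) ≤ (b:ℕ) then ((ccoef β (N-1) ((b:ℕ)-(a:ℕ)) : ℝ):ℂ)
          else -(((ccoef β (N-1) ((N-1)-((a:ℕ)-(b:ℕ))) : ℝ):ℂ))) * ζ^(a:ℕ) := by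
    intro a
    rw [skG_entry β N hN b a]
    congr 1
    split_ifs <;> simp
  rw [Finset.sum_congr rfl (fun a _ => hentry a)]
  rw [Fin.sum_univ_eq_sum_range
    (fun x => (if x ≤ (b:ℕ) then ((ccoef β (N-1) ((b:ℕ)-x) : ℝ):ℂ)
      else -(((ccoef β (N-1) ((N-1)-(x-(b:ℕ)))) : ℝ):ℂ)) * ζ^x) (N-1)]
  exact rowSum (N-1) (fun m => ((ccoef β (N-1) m : ℝ):ℂ)) ζ hζ (b:ℕ) b.isLt
theorem Psk_eigenvalues_re_ge (N : ℕ) (hN : 3 ≤ N)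
    (β α h τ e1 e2 : ℝ) (hβ1 : 1 < β) (hβ2 : β < 2)
    (hα0 : 0 < α) (hα1 : α < 1) (hh : 0 < h) (hτ : 0 < τ)
    (he1 : 0 < e1) (he2 : 0 < e2) :
    0 < h ^ β * c0 α τ ∧
    ∀ μ ∈ spectrum ℂ ((Psk β α h τ e1 e2 N).map (Complex.ofReal : ℝ → ℂ)),
      h ^ β * c0 α τ ≤ μ.re := by
  have hσ : (0:ℝ) < 1 - α/2 := by linarith
  have hc : 0 < h ^ β * c0 α τ := by
    have h1 : (0:ℝ) < Real.Gamma (2-α) := Real.Gamma_pos_of_pos (by linarith)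
    have h2 : (0:ℝ) < τ ^ (-α) := Real.rpow_pos_of_pos hτ _
    have h3 : (0:ℝ) < (1 - α/2) ^ (1-α) := Real.rpow_pos_of_pos hσ _
    have h4 : (0:ℝ) < h ^ β := Real.rpow_pos_of_pos hh _
    rw [c0]; positivity
  refine ⟨hc, ?_⟩
  intro μ hμ
  have hn2 : 2 ≤ N - 1 := by omega
  have hn0 : 0 < N - 1 := by omega
  set Mc := (Psk β α h τ e1 e2 N).map (Complex.ofReal : ℝ → ℂ) with hMcdef
  rw [spectrum.mem_iff] at hμ
  have hdet : ((algebraMap ℂ (Matrix (Fin (N-1)) (Fin (N-1)) ℂ)) μ - Mc).det = 0 := by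
    by_contra hd
    exact hμ ((Matrix.isUnit_iff_isUnit_det _).2 (isUnit_iff_ne_zero.2 hd))
  obtain ⟨v, hv0, hvz⟩ := Matrix.exists_mulVec_eq_zero_iff.mpr hdet
  have heig : Mc *ᵥ v = μ • v := by
    rw [Algebra.algebraMap_eq_smul_one, Matrix.sub_mulVec, Matrix.smul_mulVec,
      Matrix.one_mulVec, sub_eq_zero] at hvz
    exact hvz.symm
  obtain ⟨k, hdk⟩ := exists_dk (N-1) hn0 v hv0
  set ζ : ℂ := (starRingEnd ℂ) (eta (N-1) k) with hζdef
  have hζn : ζ ^ (N-1) = -1 := by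
    rw [hζdef, ← map_pow, eta_pow (N-1) hn0 k]
    simp
  have hζ0 : ζ ≠ 0 := by
    intro hz
    rw [hz, zero_pow (by omega)] at hζn
    exact absurd hζn.symm (by norm_num)
  have habs : ‖ζ‖ = 1 := by
    rw [hζdef, Complex.norm_conj]
    exact eta_abs (N-1) k
  set cc : ℕ → ℂ := fun m => ((ccoef β (N-1) m : ℝ) : ℂ) with hccdef
  set Fp : ℂ := ∑ m ∈ Finset.range (N-1), cc m * ζ^m with hFpdef
  set Fm : ℂ := ∑ m ∈ Finset.range (N-1), cc m * (ζ⁻¹)^m with hFmdef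
  set μ' : ℂ := ((h ^ β * c0 α τ : ℝ):ℂ)
      - ((1-α/2 : ℝ):ℂ) * (((e1:ℝ):ℂ) * Fp + ((e2:ℝ):ℂ) * Fm) with hμ'def
  have hMccol : ∀ b : Fin (N-1), ∑ a : Fin (N-1), Mc a b * ζ^(a:ℕ) = μ' * ζ^(b:ℕ) := by
    intro b
    have hentry : ∀ a : Fin (N-1), Mc a b * ζ^(a:ℕ)
        = ((h ^ β * c0 α τ : ℝ):ℂ) * ((if a = b then (1:ℂ) else 0) * ζ^(a:ℕ))
          - ((1-α/2:ℝ):ℂ) * ((e1:ℝ):ℂ) * (((skG β N a b : ℝ):ℂ) * ζ^(a:ℕ))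
          - ((1-α/2:ℝ):ℂ) * ((e2:ℝ):ℂ) * (((skG β N b a : ℝ):ℂ) * ζ^(a:ℕ)) := by
      intro a
      have hMe : Mc a b = Complex.ofReal ((h^β * c0 α τ) * (if a = b then (1:ℝ) else 0)
          - (1-α/2) * (e1 * skG β N a b + e2 * skG β N b a)) := by
        rw [hMcdef]
        simp [Psk, skK, Matrix.map_apply, Matrix.sub_apply, Matrix.smul_apply,
          Matrix.add_apply, Matrix.transpose_apply, Matrix.one_apply, smul_eq_mul,
          mul_add, mul_ite, mul_one, mul_zero]
      rw [hMe]
      split_ifs <;> push_cast <;> ring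
    rw [Finset.sum_congr rfl (fun a _ => hentry a)]
    rw [Finset.sum_sub_distrib, Finset.sum_sub_distrib,
      ← Finset.mul_sum, ← Finset.mul_sum, ← Finset.mul_sum]
    rw [skG_colSum β N hN ζ hζn b, skG_rowSum β N hN ζ hζn b]
    have hid : ∑ a : Fin (N-1), (if a = b then (1:ℂ) else 0) * ζ^(a:ℕ) = ζ^(b:ℕ) := by
      simp [ite_mul]
    rw [hid, hμ'def]
    ring
  have hkey : μ' * (∑ b : Fin (N-1), ζ^(b:ℕ) * v b)
      = μ * (∑ b : Fin (N-1), ζ^(b:ℕ) * v b) := by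
    have lhs1 : ∑ a : Fin (N-1), ζ^(a:ℕ) * (Mc *ᵥ v) a
        = ∑ b : Fin (N-1), (∑ a : Fin (N-1), Mc a b * ζ^(a:ℕ)) * v b := by
      simp only [Matrix.mulVec, dotProduct]
      calc ∑ a : Fin (N-1), ζ^(a:ℕ) * (∑ b : Fin (N-1), Mc a b * v b)
          = ∑ a : Fin (N-1), ∑ b : Fin (N-1), ζ^(a:ℕ) * (Mc a b * v b) := by
            exact Finset.sum_congr rfl fun a _ => Finset.mul_sum _ _ _
        _ = ∑ b : Fin (N-1), ∑ a : Fin (N-1), ζ^(a:ℕ) * (Mc a b * v b) := Finset.sum_comm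
        _ = ∑ b : Fin (N-1), (∑ a : Fin (N-1), Mc a b * ζ^(a:ℕ)) * v b := by
            refine Finset.sum_congr rfl fun b _ => ?_
            rw [Finset.sum_mul]
            exact Finset.sum_congr rfl fun a _ => by ring
    have lhs2 : ∑ a : Fin (N-1), ζ^(a:ℕ) * (Mc *ᵥ v) a
        = ∑ b : Fin (N-1), (μ' * ζ^(b:ℕ)) * v b := by
      rw [lhs1]
      exact Finset.sum_congr rfl fun b _ => by rw [hMccol b]
    have rhs : ∑ a : Fin (N-1), ζ^(a:ℕ) * (Mc *ᵥ v) a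
        = μ * ∑ b : Fin (N-1), ζ^(b:ℕ) * v b := by
      rw [heig, Finset.mul_sum]
      exact Finset.sum_congr rfl fun a _ => by
        simp only [Pi.smul_apply, smul_eq_mul]; ring
    rw [← rhs, lhs2, Finset.mul_sum]
    exact Finset.sum_congr rfl fun b _ => by ring
  have hμeq : μ = μ' := (mul_right_cancel₀ hdk hkey).symm
  rw [hμeq, hμ'def]
  have hinv : ζ⁻¹ = (starRingEnd ℂ) ζ := by
    rw [Complex.inv_def, Complex.normSq_eq_norm_sq, habs]
    simp
  have hre_eq : ∀ m : ℕ, ((ζ⁻¹)^m).re = (ζ^m).re := by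
    intro m
    rw [hinv, ← map_pow]
    exact Complex.conj_re _
  have hFpre : Fp.re = ∑ m ∈ Finset.range (N-1), ccoef β (N-1) m * (ζ^m).re := by
    rw [hFpdef, Complex.re_sum]
    exact Finset.sum_congr rfl fun m _ => by
      rw [hccdef]
      exact Complex.re_ofReal_mul _ _
  have hFmre : Fm.re = ∑ m ∈ Finset.range (N-1), ccoef β (N-1) m * (ζ^m).re := by
    rw [hFmdef, Complex.re_sum]
    exact Finset.sum_congr rfl fun m _ => by
      rw [hccdef, Complex.re_ofReal_mul, hre_eq m]
  have hr1 : ∀ m, (ζ^m).re ≤ 1 := by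
    intro m
    have h1 := Complex.abs_re_le_norm (ζ^m)
    rw [norm_pow, habs, one_pow] at h1
    cases abs_le.1 h1 with
    | intro hl hr => exact hr
  have hr0 : (ζ^0).re = 1 := by simp
  have hlast : (ζ^(N-1-1)).re = -((ζ^1).re) := by
    have h1 : ζ^(N-1-1) = ζ^(N-1) * (ζ^1)⁻¹ := pow_sub₀ ζ hζ0 (by omega)
    rw [h1, hζn, pow_one, hinv]
    simp
  have hL : ∑ m ∈ Finset.range (N-1), ccoef β (N-1) m * (ζ^m).re ≤ 0 :=
    Lbound hβ1 hβ2 (N-1) hn2 (fun m => (ζ^m).re) hr1 hr0 hlast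
  have hre : (((h ^ β * c0 α τ : ℝ):ℂ)
      - ((1-α/2 : ℝ):ℂ) * (((e1:ℝ):ℂ) * Fp + ((e2:ℝ):ℂ) * Fm)).re
      = h ^ β * c0 α τ - (1-α/2) * (e1 * Fp.re + e2 * Fm.re) := by
    simp [Complex.sub_re, Complex.add_re, Complex.mul_re, Complex.ofReal_re,
      Complex.ofReal_im]
    try ring
  rw [hre, hFpre, hFmre]
  nlinarith [hL, mul_nonneg he1.le (neg_nonneg.mpr hL), mul_nonneg he2.le (neg_nonneg.mpr hL)]
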